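/- Let L > 0, T > 0 and fix feedback gains α, β with 0 < |α| < 1 and β > 0. Every classical solution u of the closed-loop linear KP-II system on [0,L]² × [0,T] satisfies the identity T ∫_Ω u(x,y,0)² dx dy = ∫₀^T ∫_Ω u(x,y,t)² dx dy dt + 2β ∫₀^T ∫₀^L (T−t) u(x,L,t)² dx dt + (1−α²) ∫₀^T ∫₀^L (T−t) u_x(0,y,t)² dy dt + ∫₀^T ∫₀^L (T−t) ((∂ₓ⁻¹ u_y)(0,y,t))² dy dt. -/

import Mathlib

open MeasureTheory Real

noncomputable section

/-- Partial derivative in `x` of `u(x,y,t)`. -/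
def pdx (u : ℝ → ℝ → ℝ → ℝ) (x y t : ℝ) : ℝ := deriv (fun x' => u x' y t) x

/-- Third partial derivative in `x` of `u(x,y,t)`. -/
def pdx3 (u : ℝ → ℝ → ℝ → ℝ) (x y t : ℝ) : ℝ := iteratedDeriv 3 (fun x' => u x' y t) x

/-- Partial derivative in `y` of `u(x,y,t)`. -/
def pdy (u : ℝ → ℝ → ℝ → ℝ) (x y t : ℝ) : ℝ := deriv (fun y' => u x y' t) y

/-- Second partial derivative in `y` of `u(x,y,t)`. -/
def pdy2 (u : ℝ → ℝ → ℝ → ℝ) (x y t : ℝ) : ℝ := iteratedDeriv 2 (fun y' => u x y' t) y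

/-- Partial derivative in `t` of `u(x,y,t)`. -/
def pdt (u : ℝ → ℝ → ℝ → ℝ) (x y t : ℝ) : ℝ := deriv (fun t' => u x y t') t

/-- The nonlocal operator `(∂ₓ⁻¹ w)(x,y) = -∫ₓ^L w(s,y) ds`. -/
def pxInv (L : ℝ) (w : ℝ → ℝ → ℝ) (x y : ℝ) : ℝ := -(∫ s in x..L, w s y)

/-- A classical solution of the closed-loop linear KP-II system on `[0,L]² × [0,T]`:
`u` is `C³`, satisfies `u_t + u_x + u_xxx + ∂ₓ⁻¹ u_yy = 0` on `Ω × (0,T)` and the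
boundary feedback conditions for all `t ∈ [0,T]`. -/
def IsKPSolution (L T α β : ℝ) (u : ℝ → ℝ → ℝ → ℝ) : Prop :=
  ContDiff ℝ 3 (fun p : ℝ × ℝ × ℝ => u p.1 p.2.1 p.2.2) ∧
  (∀ x ∈ Set.Ioo (0:ℝ) L, ∀ y ∈ Set.Ioo (0:ℝ) L, ∀ t ∈ Set.Ioo (0:ℝ) T,
      pdt u x y t + pdx u x y t + pdx3 u x y t
        + pxInv L (fun s y' => pdy2 u s y' t) x y = 0) ∧
  (∀ y ∈ Set.Icc (0:ℝ) L, ∀ t ∈ Set.Icc (0:ℝ) T,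
      u 0 y t = 0 ∧ u L y t = 0 ∧ pdx u L y t = α * pdx u 0 y t) ∧
  (∀ x ∈ Set.Icc (0:ℝ) L, ∀ t ∈ Set.Icc (0:ℝ) T,
      pdy u x L t = β * pdx u x L t ∧ pdy u x 0 t = 0)

/-- The energy `E(t) = ½ ∫_Ω u(x,y,t)² dx dy`. -/
def energy (L : ℝ) (u : ℝ → ℝ → ℝ → ℝ) (t : ℝ) : ℝ :=
  (1/2) * ∫ x in (0:ℝ)..L, ∫ y in (0:ℝ)..L, (u x y t)^2

namespace KPaux

/-- swap two interval integrals of a jointly continuous function -/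
lemma swapCI {f : ℝ → ℝ → ℝ} (hf : Continuous (Function.uncurry f)) (a b c d : ℝ) :
    ∫ x in a..b, ∫ y in c..d, f x y = ∫ y in c..d, ∫ x in a..b, f x y := by
  have key : ∀ (a b c d : ℝ), a ≤ b → c ≤ d →
      (∫ x in a..b, ∫ y in c..d, f x y) = ∫ y in c..d, ∫ x in a..b, f x y := by
    intro a b c d hab hcd
    simp only [intervalIntegral.integral_of_le hab, intervalIntegral.integral_of_le hcd]
    rw [← MeasureTheory.integral_integral_swap]
    rw [Measure.prod_restrict]
    have hc : Continuous (Function.uncurry fun y x => f x y) :=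
      hf.comp (continuous_snd.prodMk continuous_fst)
    exact (hc.continuousOn.integrableOn_compact (isCompact_Icc.prod isCompact_Icc)).mono_set
      (Set.prod_mono Set.Ioc_subset_Icc_self Set.Ioc_subset_Icc_self)
  rcases le_total a b with hab | hab <;> rcases le_total c d with hcd | hcd
  · exact key a b c d hab hcd
  · rw [intervalIntegral.integral_symm d c]
    simp only [intervalIntegral.integral_symm d c, intervalIntegral.integral_neg]
    rw [key a b d c hab hcd]
  · simp only [intervalIntegral.integral_symm b a, intervalIntegral.integral_neg]
    rw [key b a c d hab hcd]
  · simp only [intervalIntegral.integral_symm b a, intervalIntegral.integral_symm d c,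
      intervalIntegral.integral_neg]
    rw [key b a d c hab hcd]

/-- continuity of a parametric primitive with moving lower endpoint -/
lemma contParam {X : Type*} [TopologicalSpace X] [LocallyCompactSpace X]
    {w : ℝ → X → ℝ} (hw : Continuous fun q : ℝ × X => w q.1 q.2) (L : ℝ) :
    Continuous fun q : ℝ × X => ∫ s in q.1..L, w s q.2 := by
  have hcc : Continuous (Function.uncurry fun (q : ℝ × X) s => w s q.2) := by
    have : (Function.uncurry fun (q : ℝ × X) s => w s q.2)
        = fun r : (ℝ × X) × ℝ => w r.2 r.1.2 := rfl
    rw [this]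
    exact hw.comp (continuous_snd.prodMk continuous_fst.snd)
  have h1 : Continuous fun q : ℝ × X => ∫ s in (0:ℝ)..q.1, w s q.2 :=
    intervalIntegral.continuous_parametric_intervalIntegral_of_continuous hcc continuous_fst
  have h2 : Continuous fun q : ℝ × X => ∫ s in (0:ℝ)..L, w s q.2 :=
    intervalIntegral.continuous_parametric_intervalIntegral_of_continuous' hcc 0 L
  have he : (fun q : ℝ × X => ∫ s in q.1..L, w s q.2)
      = fun q => (∫ s in (0:ℝ)..L, w s q.2) - ∫ s in (0:ℝ)..q.1, w s q.2 := by
    funext q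
    rw [eq_sub_iff_add_eq, add_comm]
    have hcont : Continuous fun s => w s q.2 := hw.comp (continuous_id.prodMk continuous_const)
    exact intervalIntegral.integral_add_adjacent_intervals
      (hcont.intervalIntegrable _ _) (hcont.intervalIntegrable _ _)
  rw [he]; exact h2.sub h1

lemma hdX {H : ℝ×ℝ×ℝ → ℝ} (hH : Differentiable ℝ H) (x y t : ℝ) :
    HasDerivAt (fun x' => H (x',y,t)) (fderiv ℝ H (x,y,t) (1,0,0)) x := by
  have hc : HasDerivAt (fun x' : ℝ => ((x',y,t) : ℝ×ℝ×ℝ)) (1,0,0) x :=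
    HasDerivAt.prodMk (hasDerivAt_id x) (hasDerivAt_const x ((y,t) : ℝ×ℝ))
  exact ((hH (x,y,t)).hasFDerivAt).comp_hasDerivAt x hc

lemma hdY {H : ℝ×ℝ×ℝ → ℝ} (hH : Differentiable ℝ H) (x y t : ℝ) :
    HasDerivAt (fun y' => H (x,y',t)) (fderiv ℝ H (x,y,t) (0,1,0)) y := by
  have hc : HasDerivAt (fun y' : ℝ => ((x,y',t) : ℝ×ℝ×ℝ)) (0,1,0) y :=
    HasDerivAt.prodMk (hasDerivAt_const y x) (HasDerivAt.prodMk (hasDerivAt_id y) (hasDerivAt_const y t))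
  exact ((hH (x,y,t)).hasFDerivAt).comp_hasDerivAt y hc

lemma hdT {H : ℝ×ℝ×ℝ → ℝ} (hH : Differentiable ℝ H) (x y t : ℝ) :
    HasDerivAt (fun t' => H (x,y,t')) (fderiv ℝ H (x,y,t) (0,0,1)) t := by
  have hc : HasDerivAt (fun t' : ℝ => ((x,y,t') : ℝ×ℝ×ℝ)) (0,0,1) t :=
    HasDerivAt.prodMk (hasDerivAt_const t x) (HasDerivAt.prodMk (hasDerivAt_const t y) (hasDerivAt_id t))
  exact ((hH (x,y,t)).hasFDerivAt).comp_hasDerivAt t hc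

lemma fdir_contDiff {n : ℕ} {H : ℝ×ℝ×ℝ → ℝ} (h : ContDiff ℝ (n+1) H) (v : ℝ×ℝ×ℝ) :
    ContDiff ℝ n (fun p => fderiv ℝ H p v) :=
  (h.fderiv_right (m := n) (by norm_cast)).clm_apply contDiff_const

def UF (u : ℝ → ℝ → ℝ → ℝ) : ℝ×ℝ×ℝ → ℝ := fun p => u p.1 p.2.1 p.2.2
def DX (u : ℝ → ℝ → ℝ → ℝ) : ℝ×ℝ×ℝ → ℝ := fun p => fderiv ℝ (UF u) p (1,0,0)
def DY (u : ℝ → ℝ → ℝ → ℝ) : ℝ×ℝ×ℝ → ℝ := fun p => fderiv ℝ (UF u) p (0,1,0)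
def DT (u : ℝ → ℝ → ℝ → ℝ) : ℝ×ℝ×ℝ → ℝ := fun p => fderiv ℝ (UF u) p (0,0,1)
def DXX (u : ℝ → ℝ → ℝ → ℝ) : ℝ×ℝ×ℝ → ℝ := fun p => fderiv ℝ (DX u) p (1,0,0)
def DXXX (u : ℝ → ℝ → ℝ → ℝ) : ℝ×ℝ×ℝ → ℝ := fun p => fderiv ℝ (DXX u) p (1,0,0)
def DYY (u : ℝ → ℝ → ℝ → ℝ) : ℝ×ℝ×ℝ → ℝ := fun p => fderiv ℝ (DY u) p (0,1,0)

variable {u : ℝ → ℝ → ℝ → ℝ}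

lemma cDX (hF : ContDiff ℝ 3 (UF u)) : ContDiff ℝ 2 (DX u) :=
  fdir_contDiff (n := 2) (by exact_mod_cast hF) _
lemma cDY (hF : ContDiff ℝ 3 (UF u)) : ContDiff ℝ 2 (DY u) :=
  fdir_contDiff (n := 2) (by exact_mod_cast hF) _
lemma cDT (hF : ContDiff ℝ 3 (UF u)) : ContDiff ℝ 2 (DT u) :=
  fdir_contDiff (n := 2) (by exact_mod_cast hF) _
lemma cDXX (hF : ContDiff ℝ 3 (UF u)) : ContDiff ℝ 1 (DXX u) :=
  fdir_contDiff (n := 1) (by exact_mod_cast cDX hF) _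
lemma cDXXX (hF : ContDiff ℝ 3 (UF u)) : Continuous (DXXX u) :=
  (fdir_contDiff (n := 0) (by exact_mod_cast cDXX hF) _).continuous
lemma cDYY (hF : ContDiff ℝ 3 (UF u)) : ContDiff ℝ 1 (DYY u) :=
  fdir_contDiff (n := 1) (by exact_mod_cast cDY hF) _

lemma dUF (hF : ContDiff ℝ 3 (UF u)) : Differentiable ℝ (UF u) :=
  hF.differentiable (by norm_num)

lemma pdx_eq (hF : ContDiff ℝ 3 (UF u)) (x y t : ℝ) : pdx u x y t = DX u (x,y,t) :=
  (hdX (dUF hF) x y t).deriv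
lemma pdy_eq (hF : ContDiff ℝ 3 (UF u)) (x y t : ℝ) : pdy u x y t = DY u (x,y,t) :=
  (hdY (dUF hF) x y t).deriv
lemma pdt_eq (hF : ContDiff ℝ 3 (UF u)) (x y t : ℝ) : pdt u x y t = DT u (x,y,t) :=
  (hdT (dUF hF) x y t).deriv

lemma pdy2_eq (hF : ContDiff ℝ 3 (UF u)) (x y t : ℝ) : pdy2 u x y t = DYY u (x,y,t) := by
  have h1 : (deriv fun y' => u x y' t) = fun y' => DY u (x,y',t) := by
    funext y'; exact (hdY (dUF hF) x y' t).deriv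
  rw [pdy2, iteratedDeriv_succ, iteratedDeriv_one, h1]
  exact (hdY ((cDY hF).differentiable (by norm_num)) x y t).deriv

lemma pdx3_eq (hF : ContDiff ℝ 3 (UF u)) (x y t : ℝ) : pdx3 u x y t = DXXX u (x,y,t) := by
  have h1 : (deriv fun x' => u x' y t) = fun x' => DX u (x',y,t) := by
    funext x'; exact (hdX (dUF hF) x' y t).deriv
  have h2 : (deriv fun x' => DX u (x',y,t)) = fun x' => DXX u (x',y,t) := by
    funext x'; exact (hdX ((cDX hF).differentiable (by norm_num)) x' y t).deriv
  rw [pdx3, iteratedDeriv_succ, iteratedDeriv_succ, iteratedDeriv_one, h1, h2]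
  exact (hdX ((cDXX hF).differentiable (by norm_num)) x y t).deriv

lemma hsq {f : ℝ → ℝ} {f' : ℝ} {x : ℝ} (h : HasDerivAt f f' x) :
    HasDerivAt (fun z => (f z)^2) (2 * f x * f') x := by
  have h2 : HasDerivAt (fun z => f z * f z) (f' * f x + f x * f') x := h.mul h
  have he : (fun z => f z * f z) = fun z => (f z)^2 := by funext z; ring
  rw [he] at h2
  convert h2 using 1; ring

end KPaux
namespace KPaux

variable {u : ℝ → ℝ → ℝ → ℝ}

def VV (L : ℝ) (u : ℝ → ℝ → ℝ → ℝ) (x y t : ℝ) : ℝ := -(∫ s in x..L, DY u (s,y,t))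
def QQ (L : ℝ) (u : ℝ → ℝ → ℝ → ℝ) (x y t : ℝ) : ℝ := -(∫ s in x..L, DYY u (s,y,t))

lemma cVV (L : ℝ) (hF : ContDiff ℝ 3 (UF u)) :
    Continuous fun p : ℝ×ℝ×ℝ => VV L u p.1 p.2.1 p.2.2 := by
  have hw : Continuous fun q : ℝ × (ℝ × ℝ) => DY u (q.1, q.2.1, q.2.2) :=
    (cDY hF).continuous.comp (by fun_prop)
  exact (contParam (X := ℝ × ℝ) (w := fun s q => DY u (s, q.1, q.2)) hw L).neg

lemma cQQ (L : ℝ) (hF : ContDiff ℝ 3 (UF u)) :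
    Continuous fun p : ℝ×ℝ×ℝ => QQ L u p.1 p.2.1 p.2.2 := by
  have hw : Continuous fun q : ℝ × (ℝ × ℝ) => DYY u (q.1, q.2.1, q.2.2) :=
    (cDYY hF).continuous.comp (by fun_prop)
  exact (contParam (X := ℝ × ℝ) (w := fun s q => DYY u (s, q.1, q.2)) hw L).neg

lemma VV_x (L : ℝ) (hF : ContDiff ℝ 3 (UF u)) (x y t : ℝ) :
    HasDerivAt (fun x' => VV L u x' y t) (DY u (x,y,t)) x := by
  have hg : Continuous fun s => DY u (s,y,t) := (cDY hF).continuous.comp (by fun_prop)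
  have h := intervalIntegral.integral_hasDerivAt_right (f := fun s => DY u (s,y,t))
      (hg.intervalIntegrable L x) (hg.stronglyMeasurableAtFilter _ _) hg.continuousAt
  have he : (fun x' => VV L u x' y t) = fun x' => ∫ s in L..x', DY u (s,y,t) := by
    funext x'; rw [VV, intervalIntegral.integral_symm, neg_neg]
  rw [he]; exact h

lemma VV_y (L : ℝ) (hF : ContDiff ℝ 3 (UF u)) (x y t : ℝ) :
    HasDerivAt (fun y' => VV L u x y' t) (QQ L u x y t) y := by
  have hdyy_cont : Continuous (DYY u) := (cDYY hF).continuous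
  have hDYcont : ∀ y' : ℝ, Continuous fun s => DY u (s,y',t) := fun y' =>
    (cDY hF).continuous.comp (by fun_prop)
  have key : ∀ y' : ℝ, (∫ η in (0:ℝ)..y', QQ L u x η t) = VV L u x y' t - VV L u x 0 t := by
    intro y'
    have h1 : ∀ s : ℝ, (∫ η in (0:ℝ)..y', DYY u (s,η,t)) = DY u (s,y',t) - DY u (s,0,t) := by
      intro s
      exact intervalIntegral.integral_eq_sub_of_hasDerivAt
        (fun η _ => hdY ((cDY hF).differentiable (by norm_num)) s η t)
        ((hdyy_cont.comp (by fun_prop : Continuous fun η : ℝ => ((s,η,t) : ℝ×ℝ×ℝ))).intervalIntegrable _ _)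
    have hc : Continuous (Function.uncurry fun (η s : ℝ) => DYY u (s,η,t)) :=
      hdyy_cont.comp (by fun_prop)
    calc ∫ η in (0:ℝ)..y', QQ L u x η t
        = ∫ η in (0:ℝ)..y', -(∫ s in x..L, DYY u (s,η,t)) := rfl
      _ = -(∫ η in (0:ℝ)..y', ∫ s in x..L, DYY u (s,η,t)) := intervalIntegral.integral_neg
      _ = -(∫ s in x..L, ∫ η in (0:ℝ)..y', DYY u (s,η,t)) := by
            rw [swapCI hc 0 y' x L]
      _ = -(∫ s in x..L, (DY u (s,y',t) - DY u (s,0,t))) := by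
            exact congrArg Neg.neg (intervalIntegral.integral_congr (fun s _ => h1 s))
      _ = -((∫ s in x..L, DY u (s,y',t)) - ∫ s in x..L, DY u (s,0,t)) := by
            rw [intervalIntegral.integral_sub ((hDYcont y').intervalIntegrable _ _)
              ((hDYcont 0).intervalIntegrable _ _)]
      _ = VV L u x y' t - VV L u x 0 t := by rw [VV, VV]; ring
  have he : (fun y' => VV L u x y' t)
      = fun y' => VV L u x 0 t + ∫ η in (0:ℝ)..y', QQ L u x η t := by
    funext y'; rw [key y']; ring
  rw [he]
  have hqc : Continuous fun η => QQ L u x η t := by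
    have h0 : Continuous fun η : ℝ => ((x,η,t) : ℝ×ℝ×ℝ) := by fun_prop
    simpa [Function.comp_def] using (cQQ L hF).comp h0
  have h := intervalIntegral.integral_hasDerivAt_right (f := fun η => QQ L u x η t)
      (hqc.intervalIntegrable 0 y) (hqc.stronglyMeasurableAtFilter _ _) hqc.continuousAt
  simpa using h.const_add (VV L u x 0 t)

lemma VV_L (L : ℝ) (y t : ℝ) : VV L u L y t = 0 := by simp [VV]

lemma VV_bot {L t : ℝ} (hb : ∀ s ∈ Set.Icc (0:ℝ) L, DY u (s,0,t) = 0)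
    {x : ℝ} (hx : x ∈ Set.Icc (0:ℝ) L) : VV L u x 0 t = 0 := by
  rw [VV]
  have : (∫ s in x..L, DY u (s,0,t)) = ∫ s in x..L, (0:ℝ) := by
    apply intervalIntegral.integral_congr
    intro s hs
    rw [Set.uIcc_of_le hx.2] at hs
    exact hb s ⟨le_trans hx.1 hs.1, hs.2⟩
  rw [this]; simp

lemma VV_top {L t β : ℝ} (hF : ContDiff ℝ 3 (UF u))
    (hb : ∀ s ∈ Set.Icc (0:ℝ) L, DY u (s,L,t) = β * DX u (s,L,t))
    (huLL : u L L t = 0) {x : ℝ} (hx : x ∈ Set.Icc (0:ℝ) L) :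
    VV L u x L t = β * u x L t := by
  rw [VV]
  have h1 : (∫ s in x..L, DY u (s,L,t)) = ∫ s in x..L, β * DX u (s,L,t) := by
    apply intervalIntegral.integral_congr
    intro s hs
    rw [Set.uIcc_of_le hx.2] at hs
    exact hb s ⟨le_trans hx.1 hs.1, hs.2⟩
  have h2 : (∫ s in x..L, DX u (s,L,t)) = u L L t - u x L t :=
    intervalIntegral.integral_eq_sub_of_hasDerivAt
      (fun s _ => hdX (dUF hF) s L t)
      (((cDX hF).continuous.comp
        (by fun_prop : Continuous fun s : ℝ => ((s,L,t) : ℝ×ℝ×ℝ))).intervalIntegrable _ _)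
  rw [h1, intervalIntegral.integral_const_mul, h2, huLL]
  ring

end KPaux

namespace KPaux

lemma contIntegral {X : Type*} [TopologicalSpace X] [LocallyCompactSpace X] {g : X → ℝ → ℝ}
    (hg : Continuous fun p : X × ℝ => g p.1 p.2) (c d : ℝ) :
    Continuous fun x : X => ∫ z in c..d, g x z := by
  apply intervalIntegral.continuous_parametric_intervalIntegral_of_continuous' (f := g) ?_ c d
  rwa [Function.uncurry_def]

lemma tripleSwap {h : ℝ×ℝ×ℝ → ℝ} (hc : Continuous h) (a b c d e f : ℝ) :
    (∫ x in a..b, ∫ y in c..d, ∫ t in e..f, h (x,y,t))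
      = ∫ t in e..f, ∫ x in a..b, ∫ y in c..d, h (x,y,t) := by
  have step1 : ∀ x, (∫ y in c..d, ∫ t in e..f, h (x,y,t))
      = ∫ t in e..f, ∫ y in c..d, h (x,y,t) := by
    intro x
    apply swapCI (f := fun y t => h (x,y,t))
    have h0 : Continuous fun p : ℝ × ℝ => ((x, p.1, p.2) : ℝ×ℝ×ℝ) := by fun_prop
    simpa [Function.uncurry_def, Function.comp_def] using hc.comp h0
  rw [intervalIntegral.integral_congr (g := fun x => ∫ t in e..f, ∫ y in c..d, h (x,y,t))
    (fun x _ => step1 x)]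
  apply swapCI (f := fun x t => ∫ y in c..d, h (x,y,t))
  rw [Function.uncurry_def]
  apply contIntegral (g := fun p : ℝ × ℝ => fun y => h (p.1, y, p.2))
  have h0 : Continuous fun q : (ℝ × ℝ) × ℝ => ((q.1.1, q.2, q.1.2) : ℝ×ℝ×ℝ) := by fun_prop
  simpa [Function.comp_def] using hc.comp h0

lemma intCongrOpen {f g : ℝ → ℝ} {b : ℝ} (hb : 0 < b) (hf : Continuous f) (hg : Continuous g)
    (h : ∀ z ∈ Set.Ioo (0:ℝ) b, f z = g z) :
    ∫ z in (0:ℝ)..b, f z = ∫ z in (0:ℝ)..b, g z := by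
  apply intervalIntegral.integral_congr
  rw [Set.uIcc_of_le hb.le, ← closure_Ioo hb.ne]
  exact Set.EqOn.closure h hf hg

end KPaux

namespace KPaux
variable {H : ℝ×ℝ×ℝ → ℝ}

lemma cS1 (hH : Continuous H) (y t : ℝ) : Continuous fun x : ℝ => H (x,y,t) := by
  have h0 : Continuous fun x : ℝ => ((x,y,t) : ℝ×ℝ×ℝ) := by fun_prop
  simpa [Function.comp_def] using hH.comp h0
lemma cS2 (hH : Continuous H) (x t : ℝ) : Continuous fun y : ℝ => H (x,y,t) := by
  have h0 : Continuous fun y : ℝ => ((x,y,t) : ℝ×ℝ×ℝ) := by fun_prop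
  simpa [Function.comp_def] using hH.comp h0
lemma cS3 (hH : Continuous H) (x y : ℝ) : Continuous fun t : ℝ => H (x,y,t) := by
  have h0 : Continuous fun t : ℝ => ((x,y,t) : ℝ×ℝ×ℝ) := by fun_prop
  simpa [Function.comp_def] using hH.comp h0
lemma cS12 (hH : Continuous H) (t : ℝ) : Continuous fun p : ℝ×ℝ => H (p.1,p.2,t) := by
  have h0 : Continuous fun p : ℝ×ℝ => ((p.1,p.2,t) : ℝ×ℝ×ℝ) := by fun_prop
  simpa [Function.comp_def] using hH.comp h0

lemma cIntInt {h : ℝ×ℝ×ℝ → ℝ} (hc : Continuous h) (a b c d : ℝ) :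
    Continuous fun t : ℝ => ∫ x in a..b, ∫ y in c..d, h (x,y,t) := by
  apply contIntegral (g := fun t x => ∫ y in c..d, h (x,y,t)) ?_ a b
  apply contIntegral (g := fun p : ℝ×ℝ => fun y => h (p.2,y,p.1)) ?_ c d
  exact hc.comp (by fun_prop)

end KPaux


open KPaux in
/-- Trace identity: every classical solution of the closed-loop linear KP-II system
satisfies
`T ∫_Ω u(·,·,0)² = ∫₀^T ∫_Ω u² + 2β ∫₀^T ∫₀^L (T-t) u(x,L,t)²
  + (1-α²) ∫₀^T ∫₀^L (T-t) u_x(0,y,t)² + ∫₀^T ∫₀^L (T-t) ((∂ₓ⁻¹ u_y)(0,y,t))²`. -/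
theorem kp_trace_identity (L T α β : ℝ) (hL : 0 < L) (hT : 0 < T)
    (hα0 : 0 < |α|) (hα1 : |α| < 1) (hβ : 0 < β)
    (u : ℝ → ℝ → ℝ → ℝ) (hu : IsKPSolution L T α β u) :
    T * (∫ x in (0:ℝ)..L, ∫ y in (0:ℝ)..L, (u x y 0)^2)
      = (∫ t in (0:ℝ)..T, ∫ x in (0:ℝ)..L, ∫ y in (0:ℝ)..L, (u x y t)^2)
        + 2 * β * (∫ t in (0:ℝ)..T, ∫ x in (0:ℝ)..L, (T - t) * (u x L t)^2)
        + (1 - α^2) * (∫ t in (0:ℝ)..T, ∫ y in (0:ℝ)..L, (T - t) * (pdx u 0 y t)^2)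
        + (∫ t in (0:ℝ)..T, ∫ y in (0:ℝ)..L,
            (T - t) * (pxInv L (fun s y' => pdy u s y' t) 0 y)^2) := by
  obtain ⟨hF0, hpde, hbc1, hbc2⟩ := hu
  have hF : ContDiff ℝ 3 (UF u) := hF0
  -- basic continuity
  have cU : Continuous (UF u) := hF.continuous
  have cX : Continuous (DX u) := (cDX hF).continuous
  have cY : Continuous (DY u) := (cDY hF).continuous
  have cT : Continuous (DT u) := (cDT hF).continuous
  have cXX : Continuous (DXX u) := (cDXX hF).continuous
  have cXXX : Continuous (DXXX u) := cDXXX hF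
  have cV : Continuous fun p : ℝ×ℝ×ℝ => VV L u p.1 p.2.1 p.2.2 := cVV L hF
  have cQ : Continuous fun p : ℝ×ℝ×ℝ => QQ L u p.1 p.2.1 p.2.2 := cQQ L hF
  -- rewrite the goal in terms of DX / VV
  have hVV0 : ∀ y t : ℝ, pxInv L (fun s y' => pdy u s y' t) 0 y = VV L u 0 y t := by
    intro y t; simp only [pxInv, VV, pdy_eq hF]
  have hQQe : ∀ x y t : ℝ, pxInv L (fun s y' => pdy2 u s y' t) x y = QQ L u x y t := by
    intro x y t; simp only [pxInv, QQ, pdy2_eq hF]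
  simp only [hVV0, pdx_eq hF]
  -- boundary conditions in DX / DY form
  have hb0 : ∀ y ∈ Set.Icc (0:ℝ) L, ∀ t ∈ Set.Icc (0:ℝ) T, u 0 y t = 0 :=
    fun y hy t ht => (hbc1 y hy t ht).1
  have hbL : ∀ y ∈ Set.Icc (0:ℝ) L, ∀ t ∈ Set.Icc (0:ℝ) T, u L y t = 0 :=
    fun y hy t ht => (hbc1 y hy t ht).2.1
  have hbA : ∀ y ∈ Set.Icc (0:ℝ) L, ∀ t ∈ Set.Icc (0:ℝ) T,
      DX u (L,y,t) = α * DX u (0,y,t) := by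
    intro y hy t ht
    have h := (hbc1 y hy t ht).2.2
    rwa [pdx_eq hF, pdx_eq hF] at h
  have hbB : ∀ x ∈ Set.Icc (0:ℝ) L, ∀ t ∈ Set.Icc (0:ℝ) T,
      DY u (x,L,t) = β * DX u (x,L,t) := by
    intro x hx t ht
    have h := (hbc2 x hx t ht).1
    rwa [pdy_eq hF, pdx_eq hF] at h
  have hb00 : ∀ x ∈ Set.Icc (0:ℝ) L, ∀ t ∈ Set.Icc (0:ℝ) T, DY u (x,0,t) = 0 := by
    intro x hx t ht
    have h := (hbc2 x hx t ht).2
    rwa [pdy_eq hF] at h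
  -- PDE in DX / DT / QQ form
  have hpde' : ∀ x ∈ Set.Ioo (0:ℝ) L, ∀ y ∈ Set.Ioo (0:ℝ) L, ∀ t ∈ Set.Ioo (0:ℝ) T,
      DT u (x,y,t) = -(DX u (x,y,t) + DXXX u (x,y,t) + QQ L u x y t) := by
    intro x hx y hy t ht
    have h := hpde x hx y hy t ht
    rw [pdt_eq hF, pdx_eq hF, pdx3_eq hF, hQQe] at h
    linarith
  ----------------------------------------------------------------
  -- TIME IDENTITY (pointwise in (x, y))
  ----------------------------------------------------------------
  have timeId : ∀ x y : ℝ, T * (u x y 0)^2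
      = (∫ t in (0:ℝ)..T, (u x y t)^2)
        + ∫ t in (0:ℝ)..T, (T - t) * ((-2) * (u x y t * DT u (x,y,t))) := by
    intro x y
    have hder : ∀ t' : ℝ, HasDerivAt (fun s => (T - s) * (u x y s)^2)
        (-((u x y t')^2 + (T - t') * ((-2) * (u x y t' * DT u (x,y,t'))))) t' := by
      intro t'
      have h1 : HasDerivAt (fun s : ℝ => T - s) (-1) t' := by
        simpa using (hasDerivAt_id t').const_sub T
      have h2 : HasDerivAt (fun s : ℝ => (u x y s)^2)
          (2 * u x y t' * DT u (x,y,t')) t' := hsq (hdT (dUF hF) x y t')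
      have h3 : HasDerivAt (fun s => (T - s) * (u x y s)^2)
          (-1 * (u x y t')^2 + (T - t') * (2 * u x y t' * DT u (x,y,t'))) t' := h1.mul h2
      convert h3 using 1; ring
    have hcu : Continuous fun s : ℝ => u x y s := cS3 cU x y
    have hct : Continuous fun s : ℝ => DT u (x,y,s) := cS3 cT x y
    have hc1 : Continuous fun s : ℝ => (u x y s)^2 := hcu.pow 2
    have hc2 : Continuous fun s : ℝ => (T - s) * ((-2) * (u x y s * DT u (x,y,s))) :=
      (continuous_const.sub continuous_id).mul (continuous_const.mul (hcu.mul hct))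
    have hftc := intervalIntegral.integral_eq_sub_of_hasDerivAt
      (f := fun s => (T - s) * (u x y s)^2) (fun t' _ => hder t')
      (((hc1.add hc2).neg).intervalIntegrable 0 T)
    rw [intervalIntegral.integral_neg] at hftc
    have hsplit := intervalIntegral.integral_add (μ := volume) (a := (0:ℝ)) (b := T)
      (hc1.intervalIntegrable 0 T) (hc2.intervalIntegrable 0 T)
    have hrr : (T - T) * (u x y T)^2 - (T - 0) * (u x y 0)^2 = -(T * (u x y 0)^2) := by ring
    rw [hrr] at hftc
    have h4 : (∫ t' in (0:ℝ)..T,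
        ((u x y t')^2 + (T - t') * ((-2) * (u x y t' * DT u (x,y,t'))))) = T * (u x y 0)^2 := by
      have := neg_injective hftc; linarith [this]
    rw [hsplit] at h4
    linarith [h4]
  ----------------------------------------------------------------
  -- SPACE IDENTITY (for each t in (0, T))
  ----------------------------------------------------------------
  have spaceId : ∀ t ∈ Set.Ioo (0:ℝ) T,
      (∫ x in (0:ℝ)..L, ∫ y in (0:ℝ)..L, (-2) * (u x y t * DT u (x,y,t)))
        = 2*β*(∫ x in (0:ℝ)..L, (u x L t)^2)
          + (1-α^2)*(∫ y in (0:ℝ)..L, (DX u (0,y,t))^2)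
          + (∫ y in (0:ℝ)..L, (VV L u 0 y t)^2) := by
    intro t ht
    have htI : t ∈ Set.Icc (0:ℝ) T := ⟨ht.1.le, ht.2.le⟩
    have hLIcc : L ∈ Set.Icc (0:ℝ) L := ⟨hL.le, le_refl L⟩
    -- continuity of slices (fixed t)
    have cu2 : ∀ x, Continuous fun y => u x y t := fun x => cS2 cU x t
    have cdt2 : ∀ x, Continuous fun y => DT u (x,y,t) := fun x => cS2 cT x t
    have cdx2 : ∀ x, Continuous fun y => DX u (x,y,t) := fun x => cS2 cX x t
    have cxxx2 : ∀ x, Continuous fun y => DXXX u (x,y,t) := fun x => cS2 cXXX x t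
    have cdy2 : ∀ x, Continuous fun y => DY u (x,y,t) := fun x => cS2 cY x t
    have cq2 : ∀ x, Continuous fun y => QQ L u x y t := fun x => cS2 cQ x t
    have cv2 : ∀ x, Continuous fun y => VV L u x y t := fun x => cS2 cV x t
    have cu1 : ∀ y, Continuous fun x => u x y t := fun y => cS1 cU y t
    have cdx1 : ∀ y, Continuous fun x => DX u (x,y,t) := fun y => cS1 cX y t
    have cxxx1 : ∀ y, Continuous fun x => DXXX u (x,y,t) := fun y => cS1 cXXX y t
    have cdy1 : ∀ y, Continuous fun x => DY u (x,y,t) := fun y => cS1 cY y t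
    have cv1 : ∀ y, Continuous fun x => VV L u x y t := fun y => cS1 cV y t
    have cu12 : Continuous fun p : ℝ×ℝ => u p.1 p.2 t := cS12 cU t
    have cdt12 : Continuous fun p : ℝ×ℝ => DT u (p.1,p.2,t) := cS12 cT t
    have cdx12 : Continuous fun p : ℝ×ℝ => DX u (p.1,p.2,t) := cS12 cX t
    have cxxx12 : Continuous fun p : ℝ×ℝ => DXXX u (p.1,p.2,t) := cS12 cXXX t
    have cdy12 : Continuous fun p : ℝ×ℝ => DY u (p.1,p.2,t) := cS12 cY t
    have cq12 : Continuous fun p : ℝ×ℝ => QQ L u p.1 p.2 t := cS12 cQ t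
    have cv12 : Continuous fun p : ℝ×ℝ => VV L u p.1 p.2 t := cS12 cV t
    -- names for boundary conditions at this t
    have hbB' : ∀ s ∈ Set.Icc (0:ℝ) L, DY u (s,L,t) = β * DX u (s,L,t) :=
      fun s hs => hbB s hs t htI
    have hb00' : ∀ s ∈ Set.Icc (0:ℝ) L, DY u (s,0,t) = 0 := fun s hs => hb00 s hs t htI
    -- STEP 1: use the PDE
    have step1 : (∫ x in (0:ℝ)..L, ∫ y in (0:ℝ)..L, (-2) * (u x y t * DT u (x,y,t)))
        = ∫ x in (0:ℝ)..L, ∫ y in (0:ℝ)..L,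
            (2*(u x y t * DX u (x,y,t)) + (2*(u x y t * DXXX u (x,y,t))
              + 2*(u x y t * QQ L u x y t))) := by
      have cInL : Continuous fun x => ∫ y in (0:ℝ)..L, (-2) * (u x y t * DT u (x,y,t)) :=
        contIntegral (g := fun x y => (-2) * (u x y t * DT u (x,y,t)))
          (continuous_const.mul (cu12.mul cdt12)) 0 L
      have cInR : Continuous fun x => ∫ y in (0:ℝ)..L,
          (2*(u x y t * DX u (x,y,t)) + (2*(u x y t * DXXX u (x,y,t))
            + 2*(u x y t * QQ L u x y t))) :=
        contIntegral (g := fun x y => (2*(u x y t * DX u (x,y,t))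
            + (2*(u x y t * DXXX u (x,y,t)) + 2*(u x y t * QQ L u x y t))))
          ((continuous_const.mul (cu12.mul cdx12)).add
            ((continuous_const.mul (cu12.mul cxxx12)).add
              (continuous_const.mul (cu12.mul cq12)))) 0 L
      apply intCongrOpen hL cInL cInR
      intro x hx
      apply intCongrOpen hL
      · exact continuous_const.mul ((cu2 x).mul (cdt2 x))
      · exact (continuous_const.mul ((cu2 x).mul (cdx2 x))).add
          ((continuous_const.mul ((cu2 x).mul (cxxx2 x))).add
            (continuous_const.mul ((cu2 x).mul (cq2 x))))
      intro y hy
      rw [hpde' x hx y hy t ht]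
      ring
    -- STEP 2: split the integrals
    have step2 : (∫ x in (0:ℝ)..L, ∫ y in (0:ℝ)..L,
          (2*(u x y t * DX u (x,y,t)) + (2*(u x y t * DXXX u (x,y,t))
            + 2*(u x y t * QQ L u x y t))))
        = (∫ x in (0:ℝ)..L, ∫ y in (0:ℝ)..L, 2*(u x y t * DX u (x,y,t)))
          + ((∫ x in (0:ℝ)..L, ∫ y in (0:ℝ)..L, 2*(u x y t * DXXX u (x,y,t)))
            + (∫ x in (0:ℝ)..L, ∫ y in (0:ℝ)..L, 2*(u x y t * QQ L u x y t))) := by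
      have hin : ∀ x : ℝ, (∫ y in (0:ℝ)..L,
          (2*(u x y t * DX u (x,y,t)) + (2*(u x y t * DXXX u (x,y,t))
            + 2*(u x y t * QQ L u x y t))))
          = (∫ y in (0:ℝ)..L, 2*(u x y t * DX u (x,y,t)))
            + ((∫ y in (0:ℝ)..L, 2*(u x y t * DXXX u (x,y,t)))
              + (∫ y in (0:ℝ)..L, 2*(u x y t * QQ L u x y t))) := by
        intro x
        rw [intervalIntegral.integral_add (f := fun y => 2*(u x y t * DX u (x,y,t)))
          (g := fun y => 2*(u x y t * DXXX u (x,y,t)) + 2*(u x y t * QQ L u x y t))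
          ((continuous_const.mul ((cu2 x).mul (cdx2 x))).intervalIntegrable _ _)
          (((continuous_const.mul ((cu2 x).mul (cxxx2 x))).add
            (continuous_const.mul ((cu2 x).mul (cq2 x)))).intervalIntegrable _ _),
          intervalIntegral.integral_add (f := fun y => 2*(u x y t * DXXX u (x,y,t)))
          (g := fun y => 2*(u x y t * QQ L u x y t))
          ((continuous_const.mul ((cu2 x).mul (cxxx2 x))).intervalIntegrable _ _)
          ((continuous_const.mul ((cu2 x).mul (cq2 x))).intervalIntegrable _ _)]
      rw [intervalIntegral.integral_congr (g := fun x =>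
        (∫ y in (0:ℝ)..L, 2*(u x y t * DX u (x,y,t)))
          + ((∫ y in (0:ℝ)..L, 2*(u x y t * DXXX u (x,y,t)))
            + (∫ y in (0:ℝ)..L, 2*(u x y t * QQ L u x y t)))) (fun x _ => hin x)]
      have ci1 : Continuous fun x => ∫ y in (0:ℝ)..L, 2*(u x y t * DX u (x,y,t)) :=
        contIntegral (g := fun x y => 2*(u x y t * DX u (x,y,t)))
          (continuous_const.mul (cu12.mul cdx12)) 0 L
      have ci2 : Continuous fun x => ∫ y in (0:ℝ)..L, 2*(u x y t * DXXX u (x,y,t)) :=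
        contIntegral (g := fun x y => 2*(u x y t * DXXX u (x,y,t)))
          (continuous_const.mul (cu12.mul cxxx12)) 0 L
      have ci3 : Continuous fun x => ∫ y in (0:ℝ)..L, 2*(u x y t * QQ L u x y t) :=
        contIntegral (g := fun x y => 2*(u x y t * QQ L u x y t))
          (continuous_const.mul (cu12.mul cq12)) 0 L
      rw [intervalIntegral.integral_add (g := fun x => (∫ y in (0:ℝ)..L, 2*(u x y t * DXXX u (x,y,t)))
          + ∫ y in (0:ℝ)..L, 2*(u x y t * QQ L u x y t)) (ci1.intervalIntegrable _ _)
        ((ci2.add ci3).intervalIntegrable _ _),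
        intervalIntegral.integral_add (ci2.intervalIntegrable _ _)
        (ci3.intervalIntegrable _ _)]
    -- TERM 1 : transport term integrates to zero
    have term1 : (∫ x in (0:ℝ)..L, ∫ y in (0:ℝ)..L, 2*(u x y t * DX u (x,y,t))) = 0 := by
      rw [swapCI (f := fun x y => 2*(u x y t * DX u (x,y,t)))
        (by exact continuous_const.mul (cu12.mul cdx12)) 0 L 0 L]
      have hin : ∀ y ∈ Set.uIcc (0:ℝ) L,
          (∫ x in (0:ℝ)..L, 2*(u x y t * DX u (x,y,t))) = 0 := by
        intro y hy
        have hy' : y ∈ Set.Icc (0:ℝ) L := by rwa [Set.uIcc_of_le hL.le] at hy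
        have hd : ∀ x ∈ Set.uIcc (0:ℝ) L, HasDerivAt (fun x' => (u x' y t)^2)
            (2*(u x y t * DX u (x,y,t))) x := by
          intro x _
          have h1 : HasDerivAt (fun x' => (u x' y t)^2)
              (2 * u x y t * DX u (x,y,t)) x := hsq (hdX (dUF hF) x y t)
          convert h1 using 1; ring
        rw [intervalIntegral.integral_eq_sub_of_hasDerivAt hd
          ((continuous_const.mul ((cu1 y).mul (cdx1 y))).intervalIntegrable _ _),
          hbL y hy' t htI, hb0 y hy' t htI]
        ring
      rw [intervalIntegral.integral_congr (g := fun _ => (0:ℝ)) hin]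
      simp
    -- TERM 2 : dispersive term
    have term2 : (∫ x in (0:ℝ)..L, ∫ y in (0:ℝ)..L, 2*(u x y t * DXXX u (x,y,t)))
        = (1-α^2)*(∫ y in (0:ℝ)..L, (DX u (0,y,t))^2) := by
      rw [swapCI (f := fun x y => 2*(u x y t * DXXX u (x,y,t)))
        (by exact continuous_const.mul (cu12.mul cxxx12)) 0 L 0 L]
      have hin : ∀ y ∈ Set.uIcc (0:ℝ) L,
          (∫ x in (0:ℝ)..L, 2*(u x y t * DXXX u (x,y,t)))
            = (1-α^2)*(DX u (0,y,t))^2 := by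
        intro y hy
        have hy' : y ∈ Set.Icc (0:ℝ) L := by rwa [Set.uIcc_of_le hL.le] at hy
        have hd : ∀ x ∈ Set.uIcc (0:ℝ) L,
            HasDerivAt (fun x' => 2*(u x' y t * DXX u (x',y,t)) - (DX u (x',y,t))^2)
              (2*(u x y t * DXXX u (x,y,t))) x := by
          intro x _
          have h1 : HasDerivAt (fun x' => u x' y t * DXX u (x',y,t))
              (DX u (x,y,t) * DXX u (x,y,t) + u x y t * DXXX u (x,y,t)) x :=
            (hdX (dUF hF) x y t).mul
              (hdX ((cDXX hF).differentiable (by norm_num)) x y t)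
          have h2 : HasDerivAt (fun x' => (DX u (x',y,t))^2)
              (2 * DX u (x,y,t) * DXX u (x,y,t)) x :=
            hsq (hdX ((cDX hF).differentiable (by norm_num)) x y t)
          have h3 : HasDerivAt (fun x' => 2*(u x' y t * DXX u (x',y,t)) - (DX u (x',y,t))^2)
              (2 * (DX u (x,y,t) * DXX u (x,y,t) + u x y t * DXXX u (x,y,t))
                - 2 * DX u (x,y,t) * DXX u (x,y,t)) x := (h1.const_mul 2).sub h2
          convert h3 using 1; ring
        rw [intervalIntegral.integral_eq_sub_of_hasDerivAt hd
          ((continuous_const.mul ((cu1 y).mul (cxxx1 y))).intervalIntegrable _ _),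
          hbL y hy' t htI, hb0 y hy' t htI, hbA y hy' t htI]
        ring
      rw [intervalIntegral.integral_congr
        (g := fun y => (1-α^2)*(DX u (0,y,t))^2) hin,
        intervalIntegral.integral_const_mul]
    -- TERM 3 : nonlocal term
    have term3 : (∫ x in (0:ℝ)..L, ∫ y in (0:ℝ)..L, 2*(u x y t * QQ L u x y t))
        = 2*β*(∫ x in (0:ℝ)..L, (u x L t)^2) + (∫ y in (0:ℝ)..L, (VV L u 0 y t)^2) := by
      have hin : ∀ x ∈ Set.uIcc (0:ℝ) L,
          (∫ y in (0:ℝ)..L, 2*(u x y t * QQ L u x y t))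
            = 2*β*(u x L t)^2 - ∫ y in (0:ℝ)..L, 2*(DY u (x,y,t) * VV L u x y t) := by
        intro x hx
        have hx' : x ∈ Set.Icc (0:ℝ) L := by rwa [Set.uIcc_of_le hL.le] at hx
        have hd : ∀ y ∈ Set.uIcc (0:ℝ) L,
            HasDerivAt (fun y' => 2*(u x y' t * VV L u x y' t))
              (2*(DY u (x,y,t) * VV L u x y t) + 2*(u x y t * QQ L u x y t)) y := by
          intro y _
          have h1 : HasDerivAt (fun y' => u x y' t * VV L u x y' t)
              (DY u (x,y,t) * VV L u x y t + u x y t * QQ L u x y t) y :=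
            (hdY (dUF hF) x y t).mul (VV_y L hF x y t)
          have h2 : HasDerivAt (fun y' => 2*(u x y' t * VV L u x y' t))
              (2 * (DY u (x,y,t) * VV L u x y t + u x y t * QQ L u x y t)) y := h1.const_mul 2
          convert h2 using 1; ring
        have hftc := intervalIntegral.integral_eq_sub_of_hasDerivAt hd
          (((continuous_const.mul ((cdy2 x).mul (cv2 x))).add
            (continuous_const.mul ((cu2 x).mul (cq2 x)))).intervalIntegrable _ _)
        rw [VV_top hF hbB' (hbL L hLIcc t htI) hx', VV_bot hb00' hx'] at hftc
        have hre : 2*(u x L t * (β * u x L t)) - 2*(u x 0 t * 0) = 2*β*(u x L t)^2 := by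
          ring
        rw [hre] at hftc
        have hsplit : (∫ y in (0:ℝ)..L,
              (2*(DY u (x,y,t) * VV L u x y t) + 2*(u x y t * QQ L u x y t)))
            = (∫ y in (0:ℝ)..L, 2*(DY u (x,y,t) * VV L u x y t))
              + ∫ y in (0:ℝ)..L, 2*(u x y t * QQ L u x y t) :=
          intervalIntegral.integral_add
            ((continuous_const.mul ((cdy2 x).mul (cv2 x))).intervalIntegrable 0 L)
            ((continuous_const.mul ((cu2 x).mul (cq2 x))).intervalIntegrable 0 L)
        rw [hsplit] at hftc
        linarith [hftc]
      rw [intervalIntegral.integral_congr (g := fun x =>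
        2*β*(u x L t)^2 - ∫ y in (0:ℝ)..L, 2*(DY u (x,y,t) * VV L u x y t)) hin]
      have cuL : Continuous fun x => 2*β*(u x L t)^2 :=
        continuous_const.mul ((cS1 cU L t).pow 2)
      have cIn : Continuous fun x => ∫ y in (0:ℝ)..L, 2*(DY u (x,y,t) * VV L u x y t) :=
        contIntegral (g := fun x y => 2*(DY u (x,y,t) * VV L u x y t))
          (continuous_const.mul (cdy12.mul cv12)) 0 L
      rw [intervalIntegral.integral_sub (cuL.intervalIntegrable _ _)
        (cIn.intervalIntegrable _ _)]
      rw [swapCI (f := fun x y => 2*(DY u (x,y,t) * VV L u x y t))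
        (by exact continuous_const.mul (cdy12.mul cv12)) 0 L 0 L]
      have hin2 : ∀ y ∈ Set.uIcc (0:ℝ) L,
          (∫ x in (0:ℝ)..L, 2*(DY u (x,y,t) * VV L u x y t)) = -(VV L u 0 y t)^2 := by
        intro y _
        have hd : ∀ x ∈ Set.uIcc (0:ℝ) L, HasDerivAt (fun x' => (VV L u x' y t)^2)
            (2*(DY u (x,y,t) * VV L u x y t)) x := by
          intro x _
          have h1 : HasDerivAt (fun x' => (VV L u x' y t)^2)
              (2 * VV L u x y t * DY u (x,y,t)) x := hsq (VV_x L hF x y t)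
          convert h1 using 1; ring
        rw [intervalIntegral.integral_eq_sub_of_hasDerivAt hd
          ((continuous_const.mul ((cdy1 y).mul (cv1 y))).intervalIntegrable _ _),
          VV_L]
        ring
      rw [intervalIntegral.integral_congr (g := fun y => -(VV L u 0 y t)^2) hin2,
        intervalIntegral.integral_neg, intervalIntegral.integral_const_mul]
      ring
    rw [step1, step2, term1, term2, term3]
    ring
  ----------------------------------------------------------------
  -- ASSEMBLY
  ----------------------------------------------------------------
  -- joint continuity of the two triple integrands
  have ch1 : Continuous fun p : ℝ×ℝ×ℝ => (u p.1 p.2.1 p.2.2)^2 := cU.pow 2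
  have ch2 : Continuous fun p : ℝ×ℝ×ℝ =>
      (T - p.2.2) * ((-2) * (u p.1 p.2.1 p.2.2 * DT u p)) :=
    (continuous_const.sub continuous_snd.snd).mul (continuous_const.mul (cU.mul cT))
  have h0a : Continuous fun p : (ℝ×ℝ)×ℝ => ((p.1.1, p.1.2, p.2) : ℝ×ℝ×ℝ) := by fun_prop
  have cJ1 : Continuous fun q : ℝ×ℝ => ∫ t in (0:ℝ)..T, (u q.1 q.2 t)^2 := by
    have hcc : Continuous fun p : (ℝ×ℝ)×ℝ => (u p.1.1 p.1.2 p.2)^2 := by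
      exact (cU.comp h0a).pow 2
    exact contIntegral (g := fun q : ℝ×ℝ => fun t => (u q.1 q.2 t)^2) hcc 0 T
  have cJ2 : Continuous fun q : ℝ×ℝ =>
      ∫ t in (0:ℝ)..T, (T - t) * ((-2) * (u q.1 q.2 t * DT u (q.1,q.2,t))) := by
    have hcc : Continuous fun p : (ℝ×ℝ)×ℝ =>
        (T - p.2) * ((-2) * (u p.1.1 p.1.2 p.2 * DT u (p.1.1,p.1.2,p.2))) := by
      have hu' : Continuous fun p : (ℝ×ℝ)×ℝ => u p.1.1 p.1.2 p.2 := by exact cU.comp h0a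
      have hdt' : Continuous fun p : (ℝ×ℝ)×ℝ => DT u (p.1.1,p.1.2,p.2) := by
        simpa [Function.comp_def] using cT.comp h0a
      exact (continuous_const.sub continuous_snd).mul
        (continuous_const.mul (hu'.mul hdt'))
    exact contIntegral
      (g := fun q : ℝ×ℝ => fun t => (T - t) * ((-2) * (u q.1 q.2 t * DT u (q.1,q.2,t)))) hcc 0 T
  have cJ1x : ∀ x : ℝ, Continuous fun y => ∫ t in (0:ℝ)..T, (u x y t)^2 := by
    intro x
    have h0 : Continuous fun y : ℝ => ((x,y) : ℝ×ℝ) := by fun_prop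
    simpa [Function.comp_def] using cJ1.comp h0
  have cJ2x : ∀ x : ℝ, Continuous fun y =>
      ∫ t in (0:ℝ)..T, (T - t) * ((-2) * (u x y t * DT u (x,y,t))) := by
    intro x
    have h0 : Continuous fun y : ℝ => ((x,y) : ℝ×ℝ) := by fun_prop
    simpa [Function.comp_def] using cJ2.comp h0
  -- step A : move T inside
  have hA : T * (∫ x in (0:ℝ)..L, ∫ y in (0:ℝ)..L, (u x y 0)^2)
      = ∫ x in (0:ℝ)..L, ∫ y in (0:ℝ)..L, T * (u x y 0)^2 := by
    rw [← intervalIntegral.integral_const_mul]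
    apply intervalIntegral.integral_congr
    intro x _
    dsimp only
    rw [← intervalIntegral.integral_const_mul]
  -- step B : time identity inside
  have hB : (∫ x in (0:ℝ)..L, ∫ y in (0:ℝ)..L, T * (u x y 0)^2)
      = ∫ x in (0:ℝ)..L, ∫ y in (0:ℝ)..L,
          ((∫ t in (0:ℝ)..T, (u x y t)^2)
            + ∫ t in (0:ℝ)..T, (T - t) * ((-2) * (u x y t * DT u (x,y,t)))) := by
    apply intervalIntegral.integral_congr
    intro x _
    apply intervalIntegral.integral_congr
    intro y _
    exact timeId x y
  -- step C : split
  have hC : (∫ x in (0:ℝ)..L, ∫ y in (0:ℝ)..L,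
        ((∫ t in (0:ℝ)..T, (u x y t)^2)
          + ∫ t in (0:ℝ)..T, (T - t) * ((-2) * (u x y t * DT u (x,y,t)))))
      = (∫ x in (0:ℝ)..L, ∫ y in (0:ℝ)..L, ∫ t in (0:ℝ)..T, (u x y t)^2)
        + ∫ x in (0:ℝ)..L, ∫ y in (0:ℝ)..L, ∫ t in (0:ℝ)..T,
            (T - t) * ((-2) * (u x y t * DT u (x,y,t))) := by
    rw [intervalIntegral.integral_congr (g := fun x =>
      (∫ y in (0:ℝ)..L, ∫ t in (0:ℝ)..T, (u x y t)^2)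
        + ∫ y in (0:ℝ)..L, ∫ t in (0:ℝ)..T, (T - t) * ((-2) * (u x y t * DT u (x,y,t))))
      (fun x _ => intervalIntegral.integral_add
        ((cJ1x x).intervalIntegrable _ _) ((cJ2x x).intervalIntegrable _ _))]
    exact intervalIntegral.integral_add
      ((contIntegral (g := fun x y => ∫ t in (0:ℝ)..T, (u x y t)^2) cJ1 0 L).intervalIntegrable _ _)
      ((contIntegral (g := fun x y =>
        ∫ t in (0:ℝ)..T, (T - t) * ((-2) * (u x y t * DT u (x,y,t)))) cJ2 0 L).intervalIntegrable _ _)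
  -- step D : Fubini
  have hD1 : (∫ x in (0:ℝ)..L, ∫ y in (0:ℝ)..L, ∫ t in (0:ℝ)..T, (u x y t)^2)
      = ∫ t in (0:ℝ)..T, ∫ x in (0:ℝ)..L, ∫ y in (0:ℝ)..L, (u x y t)^2 :=
    tripleSwap ch1 0 L 0 L 0 T
  have hD2 : (∫ x in (0:ℝ)..L, ∫ y in (0:ℝ)..L, ∫ t in (0:ℝ)..T,
        (T - t) * ((-2) * (u x y t * DT u (x,y,t))))
      = ∫ t in (0:ℝ)..T, ∫ x in (0:ℝ)..L, ∫ y in (0:ℝ)..L,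
          (T - t) * ((-2) * (u x y t * DT u (x,y,t))) :=
    tripleSwap ch2 0 L 0 L 0 T
  -- step E : pull out (T - t)
  have hE : ∀ t' : ℝ, (∫ x in (0:ℝ)..L, ∫ y in (0:ℝ)..L,
        (T - t') * ((-2) * (u x y t' * DT u (x,y,t'))))
      = (T - t') * ∫ x in (0:ℝ)..L, ∫ y in (0:ℝ)..L, (-2) * (u x y t' * DT u (x,y,t')) := by
    intro t'
    rw [← intervalIntegral.integral_const_mul]
    apply intervalIntegral.integral_congr
    intro x _
    dsimp only
    rw [← intervalIntegral.integral_const_mul]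
  -- continuity in t of the various space integrals
  have cS : Continuous fun t' : ℝ => ∫ x in (0:ℝ)..L, ∫ y in (0:ℝ)..L,
      (-2) * (u x y t' * DT u (x,y,t')) :=
    cIntInt (h := fun p : ℝ×ℝ×ℝ => (-2) * (u p.1 p.2.1 p.2.2 * DT u p))
      (continuous_const.mul (cU.mul cT)) 0 L 0 L
  have h0b : Continuous fun p : ℝ×ℝ => ((p.2, L, p.1) : ℝ×ℝ×ℝ) := by fun_prop
  have h0c : Continuous fun p : ℝ×ℝ => (((0:ℝ), p.2, p.1) : ℝ×ℝ×ℝ) := by fun_prop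
  have cG1 : Continuous fun t' : ℝ => ∫ x in (0:ℝ)..L, (u x L t')^2 := by
    have hcc : Continuous fun p : ℝ×ℝ => (u p.2 L p.1)^2 := by
      exact (cU.comp h0b).pow 2
    exact contIntegral (g := fun t' x => (u x L t')^2) hcc 0 L
  have cG2 : Continuous fun t' : ℝ => ∫ y in (0:ℝ)..L, (DX u (0,y,t'))^2 := by
    have hcc : Continuous fun p : ℝ×ℝ => (DX u (0,p.2,p.1))^2 := by
      exact (cX.comp h0c).pow 2
    exact contIntegral (g := fun t' y => (DX u (0,y,t'))^2) hcc 0 L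
  have cG3 : Continuous fun t' : ℝ => ∫ y in (0:ℝ)..L, (VV L u 0 y t')^2 := by
    have hcc : Continuous fun p : ℝ×ℝ => (VV L u 0 p.2 p.1)^2 := by
      exact (cV.comp h0c).pow 2
    exact contIntegral (g := fun t' y => (VV L u 0 y t')^2) hcc 0 L
  -- step F : use the space identity
  have hF2 : (∫ t' in (0:ℝ)..T, (T - t') * ∫ x in (0:ℝ)..L, ∫ y in (0:ℝ)..L,
        (-2) * (u x y t' * DT u (x,y,t')))
      = ∫ t' in (0:ℝ)..T, (T - t') *
          (2*β*(∫ x in (0:ℝ)..L, (u x L t')^2)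
            + (1-α^2)*(∫ y in (0:ℝ)..L, (DX u (0,y,t'))^2)
            + (∫ y in (0:ℝ)..L, (VV L u 0 y t')^2)) := by
    apply intCongrOpen hT
    · exact (continuous_const.sub continuous_id).mul cS
    · exact (continuous_const.sub continuous_id).mul
        (((continuous_const.mul cG1).add (continuous_const.mul cG2)).add cG3)
    · intro t' ht'
      rw [spaceId t' ht']
  -- step G : split the t integral
  have hG : (∫ t' in (0:ℝ)..T, (T - t') *
        (2*β*(∫ x in (0:ℝ)..L, (u x L t')^2)
          + (1-α^2)*(∫ y in (0:ℝ)..L, (DX u (0,y,t'))^2)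
          + (∫ y in (0:ℝ)..L, (VV L u 0 y t')^2)))
      = 2*β*(∫ t' in (0:ℝ)..T, (T - t') * ∫ x in (0:ℝ)..L, (u x L t')^2)
        + ((1-α^2)*(∫ t' in (0:ℝ)..T, (T - t') * ∫ y in (0:ℝ)..L, (DX u (0,y,t'))^2)
          + ∫ t' in (0:ℝ)..T, (T - t') * ∫ y in (0:ℝ)..L, (VV L u 0 y t')^2) := by
    rw [intervalIntegral.integral_congr (g := fun t' =>
      2*β*((T - t') * ∫ x in (0:ℝ)..L, (u x L t')^2)
        + ((1-α^2)*((T - t') * ∫ y in (0:ℝ)..L, (DX u (0,y,t'))^2)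
          + (T - t') * ∫ y in (0:ℝ)..L, (VV L u 0 y t')^2))
      (fun t' _ => by ring)]
    have i1 : IntervalIntegrable
        (fun t' => 2*β*((T - t') * ∫ x in (0:ℝ)..L, (u x L t')^2)) volume 0 T :=
      (continuous_const.mul ((continuous_const.sub continuous_id).mul cG1)).intervalIntegrable _ _
    have i2 : IntervalIntegrable
        (fun t' => (1-α^2)*((T - t') * ∫ y in (0:ℝ)..L, (DX u (0,y,t'))^2)) volume 0 T :=
      (continuous_const.mul ((continuous_const.sub continuous_id).mul cG2)).intervalIntegrable _ _
    have i3 : IntervalIntegrable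
        (fun t' => (T - t') * ∫ y in (0:ℝ)..L, (VV L u 0 y t')^2) volume 0 T :=
      ((continuous_const.sub continuous_id).mul cG3).intervalIntegrable _ _
    rw [intervalIntegral.integral_add i1 (i2.add i3), intervalIntegral.integral_add i2 i3,
      intervalIntegral.integral_const_mul, intervalIntegral.integral_const_mul]
  -- step H : move (T - t) back inside the inner integrals
  have hH1 : (∫ t' in (0:ℝ)..T, (T - t') * ∫ x in (0:ℝ)..L, (u x L t')^2)
      = ∫ t' in (0:ℝ)..T, ∫ x in (0:ℝ)..L, (T - t') * (u x L t')^2 := by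
    apply intervalIntegral.integral_congr
    intro t' _
    dsimp only
    rw [← intervalIntegral.integral_const_mul]
  have hH2 : (∫ t' in (0:ℝ)..T, (T - t') * ∫ y in (0:ℝ)..L, (DX u (0,y,t'))^2)
      = ∫ t' in (0:ℝ)..T, ∫ y in (0:ℝ)..L, (T - t') * (DX u (0,y,t'))^2 := by
    apply intervalIntegral.integral_congr
    intro t' _
    dsimp only
    rw [← intervalIntegral.integral_const_mul]
  have hH3 : (∫ t' in (0:ℝ)..T, (T - t') * ∫ y in (0:ℝ)..L, (VV L u 0 y t')^2)
      = ∫ t' in (0:ℝ)..T, ∫ y in (0:ℝ)..L, (T - t') * (VV L u 0 y t')^2 := by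
    apply intervalIntegral.integral_congr
    intro t' _
    dsimp only
    rw [← intervalIntegral.integral_const_mul]
  -- finish
  calc T * (∫ x in (0:ℝ)..L, ∫ y in (0:ℝ)..L, (u x y 0)^2)
      = ∫ x in (0:ℝ)..L, ∫ y in (0:ℝ)..L, T * (u x y 0)^2 := hA
    _ = ∫ x in (0:ℝ)..L, ∫ y in (0:ℝ)..L,
          ((∫ t in (0:ℝ)..T, (u x y t)^2)
            + ∫ t in (0:ℝ)..T, (T - t) * ((-2) * (u x y t * DT u (x,y,t)))) := hB
    _ = (∫ x in (0:ℝ)..L, ∫ y in (0:ℝ)..L, ∫ t in (0:ℝ)..T, (u x y t)^2)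
        + ∫ x in (0:ℝ)..L, ∫ y in (0:ℝ)..L, ∫ t in (0:ℝ)..T,
            (T - t) * ((-2) * (u x y t * DT u (x,y,t))) := hC
    _ = (∫ t in (0:ℝ)..T, ∫ x in (0:ℝ)..L, ∫ y in (0:ℝ)..L, (u x y t)^2)
        + ∫ t in (0:ℝ)..T, ∫ x in (0:ℝ)..L, ∫ y in (0:ℝ)..L,
            (T - t) * ((-2) * (u x y t * DT u (x,y,t))) := by rw [hD1, hD2]
    _ = (∫ t in (0:ℝ)..T, ∫ x in (0:ℝ)..L, ∫ y in (0:ℝ)..L, (u x y t)^2)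
        + ∫ t' in (0:ℝ)..T, (T - t') * ∫ x in (0:ℝ)..L, ∫ y in (0:ℝ)..L,
            (-2) * (u x y t' * DT u (x,y,t')) := by
          rw [intervalIntegral.integral_congr (fun t' _ => hE t')]
    _ = (∫ t in (0:ℝ)..T, ∫ x in (0:ℝ)..L, ∫ y in (0:ℝ)..L, (u x y t)^2)
        + ∫ t' in (0:ℝ)..T, (T - t') *
            (2*β*(∫ x in (0:ℝ)..L, (u x L t')^2)
              + (1-α^2)*(∫ y in (0:ℝ)..L, (DX u (0,y,t'))^2)
              + (∫ y in (0:ℝ)..L, (VV L u 0 y t')^2)) := by rw [hF2]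
    _ = (∫ t in (0:ℝ)..T, ∫ x in (0:ℝ)..L, ∫ y in (0:ℝ)..L, (u x y t)^2)
        + (2*β*(∫ t' in (0:ℝ)..T, (T - t') * ∫ x in (0:ℝ)..L, (u x L t')^2)
          + ((1-α^2)*(∫ t' in (0:ℝ)..T, (T - t') * ∫ y in (0:ℝ)..L, (DX u (0,y,t'))^2)
            + ∫ t' in (0:ℝ)..T, (T - t') * ∫ y in (0:ℝ)..L, (VV L u 0 y t')^2)) := by rw [hG]
    _ = _ := by rw [hH1, hH2, hH3]; ring


end
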